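/- Let H_• be a subproduct system with dim H = n, and let S_1, …, S_n be the shift operators on Fock space H_ℕ = ⊕_m H_m defined by S_k φ = p_{m+1}(e_k ⊗ φ) for φ ∈ H_m. Then for all m ≤ l, the restriction to H_l satisfies Σ_{|r|=m} S_r S_r* |_{H_l} = p_l, where the sum is over words r of length m in {1,…,n} and S_r = S_{r_1}⋯S_{r_m}. -/

import Mathlib

open scoped Matrix

noncomputable section

/-- Words of length `m` in the alphabet `{1,…,n}`. -/
abbrev Wd (n m : ℕ) := Fin m → Fin n

/-- The `m`-th full tensor power `H^{⊗m}` of `H = ℂ^n`, realized as the Euclidean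
space with orthonormal basis indexed by words of length `m`. -/
abbrev TP (n m : ℕ) : Type := EuclideanSpace ℂ (Wd n m)

variable {n : ℕ}

/-- Continuous linear map associated to a (possibly rectangular) matrix. -/
def ofMatR {ι κ : Type} [Fintype ι] [Fintype κ] [DecidableEq ι] [DecidableEq κ]
    (M : Matrix ι κ ℂ) : EuclideanSpace ℂ κ →L[ℂ] EuclideanSpace ℂ ι :=
  LinearMap.toContinuousLinearMap (Matrix.toEuclideanLin M)

/-- Matrix entry of an operator in the standard basis. -/
def ent {a : ℕ} (A : TP n a →L[ℂ] TP n a) (w v : Wd n a) : ℂ :=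
  A (EuclideanSpace.single v 1) w

def wfst {m k : ℕ} (w : Wd n (m + k)) : Wd n m := fun i => w (Fin.castAdd k i)
def wsnd {m k : ℕ} (w : Wd n (m + k)) : Wd n k := fun i => w (Fin.natAdd m i)

/-- Tensor product of vectors, under the identification `H^{⊗m} ⊗ H^{⊗k} = H^{⊗(m+k)}`. -/
def tmul {m k : ℕ} (x : TP n m) (y : TP n k) : TP n (m + k) :=
  (WithLp.equiv 2 _).symm (fun w => x (wfst w) * y (wsnd w))

/-- Tensor product of subspaces `K ⊗ L ⊆ H^{⊗(m+k)}`. -/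
def tensorSub {m k : ℕ} (K : Submodule ℂ (TP n m)) (L : Submodule ℂ (TP n k)) :
    Submodule ℂ (TP n (m + k)) :=
  Submodule.span ℂ {z | ∃ x ∈ K, ∃ y ∈ L, z = tmul x y}

/-- Tensor product of operators, under `H^{⊗m} ⊗ H^{⊗k} = H^{⊗(m+k)}`. -/
def opT {m k : ℕ} (A : TP n m →L[ℂ] TP n m) (B : TP n k →L[ℂ] TP n k) :
    TP n (m + k) →L[ℂ] TP n (m + k) :=
  ofMatR (Matrix.of fun w v => ent A (wfst w) (wfst v) * ent B (wsnd w) (wsnd v))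

/-- A subproduct system: `H_0 = ℂ` and `H_{m+k} ⊆ H_m ⊗ H_k`. -/
def IsSubproduct (H : ∀ m, Submodule ℂ (TP n m)) : Prop :=
  H 0 = ⊤ ∧ ∀ m k, H (m + k) ≤ tensorSub (H m) (H k)

/-- The orthogonal projection `p_m : H^{⊗m} → H_m` (as an operator on `H^{⊗m}`). -/
def prj (H : ∀ m, Submodule ℂ (TP n m)) (m : ℕ) : TP n m →L[ℂ] TP n m :=
  (H m).subtypeL ∘L Submodule.orthogonalProjection (H m)

/-- Left creation operator `x ↦ e_j ⊗ x`. -/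
def lcreate (j : Fin n) (m : ℕ) : TP n m →L[ℂ] TP n (m + 1) :=
  ofMatR (Matrix.of fun (w : Wd n (m + 1)) (v : Wd n m) =>
    if w 0 = j ∧ (fun i : Fin m => w i.succ) = v then 1 else 0)

/-- Right creation operator `x ↦ x ⊗ e_j`. -/
def rcreate (j : Fin n) (m : ℕ) : TP n m →L[ℂ] TP n (m + 1) :=
  ofMatR (Matrix.of fun (w : Wd n (m + 1)) (v : Wd n m) =>
    if w (Fin.last m) = j ∧ (fun i : Fin m => w i.castSucc) = v then 1 else 0)

/-- Graded component of the left shift `S_j : H_m → H_{m+1}`, `φ ↦ p_{m+1}(e_j ⊗ φ)`. -/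
def lsh (H : ∀ m, Submodule ℂ (TP n m)) (j : Fin n) (m : ℕ) : TP n m →L[ℂ] TP n (m + 1) :=
  prj H (m + 1) ∘L lcreate j m ∘L prj H m

/-- Graded component of the right shift `R_j : H_m → H_{m+1}`, `φ ↦ p_{m+1}(φ ⊗ e_j)`. -/
def rsh (H : ∀ m, Submodule ℂ (TP n m)) (j : Fin n) (m : ℕ) : TP n m →L[ℂ] TP n (m + 1) :=
  prj H (m + 1) ∘L rcreate j m ∘L prj H m

/-- Iterated left shift `S_r = S_{r_1} ⋯ S_{r_d}` as a map `H_m → H_{m+d}`. -/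
def lshW (H : ∀ m, Submodule ℂ (TP n m)) (m : ℕ) :
    ∀ d, Wd n d → (TP n m →L[ℂ] TP n (m + d))
  | 0, _ => ContinuousLinearMap.id ℂ _
  | d + 1, r => lsh H (r 0) (m + d) ∘L lshW H m d (Fin.tail r)

/-- Iterated right shift `R_r = R_{r_1} ⋯ R_{r_d}` as a map `H_m → H_{m+d}`. -/
def rshW (H : ∀ m, Submodule ℂ (TP n m)) (m : ℕ) :
    ∀ d, Wd n d → (TP n m →L[ℂ] TP n (m + d))
  | 0, _ => ContinuousLinearMap.id ℂ _
  | d + 1, r => rsh H (r (Fin.last d)) (m + d) ∘L rshW H m d (Fin.init r)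

/-- Canonical unitary identification `H^{⊗a} = H^{⊗b}` for `a = b`. -/
def castTP {a b : ℕ} (h : a = b) : TP n a →L[ℂ] TP n b :=
  ofMatR (Matrix.of fun (w : Wd n b) (v : Wd n a) =>
    if (fun i => w (Fin.cast h i)) = v then 1 else 0)

/-- `S_s : H_m → H_l` for a word `s` of length `l - m`. -/
def lshWTo (H : ∀ m, Submodule ℂ (TP n m)) (m l : ℕ) (h : m ≤ l) (s : Wd n (l - m)) :
    TP n m →L[ℂ] TP n l :=
  castTP (by omega : m + (l - m) = l) ∘L lshW H m (l - m) s

/-- `R_r : H_m → H_l` for a word `r` of length `l - m`. -/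
def rshWTo (H : ∀ m, Submodule ℂ (TP n m)) (m l : ℕ) (h : m ≤ l) (r : Wd n (l - m)) :
    TP n m →L[ℂ] TP n l :=
  castTP (by omega : m + (l - m) = l) ∘L rshW H m (l - m) r

/-- Extension of an operator on `H_m` by zero to `H^{⊗m}`. -/
def extOp (H : ∀ m, Submodule ℂ (TP n m)) {m : ℕ} (A : ↥(H m) →L[ℂ] ↥(H m)) :
    TP n m →L[ℂ] TP n m :=
  (H m).subtypeL ∘L A ∘L Submodule.orthogonalProjection (H m)

/-- Compression of an operator on `H^{⊗m}` to `H_m`. -/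
def cmpOp (H : ∀ m, Submodule ℂ (TP n m)) {m : ℕ} (T : TP n m →L[ℂ] TP n m) :
    ↥(H m) →L[ℂ] ↥(H m) :=
  Submodule.orthogonalProjection (H m) ∘L T ∘L (H m).subtypeL

def tk {m l : ℕ} (h : m ≤ l) (w : Wd n l) : Wd n m := fun i => w (Fin.castLE h i)
def dr (m : ℕ) {l : ℕ} (w : Wd n l) : Wd n (l - m) :=
  fun i => w ⟨m + i.1, by have := i.isLt; omega⟩

/-- `A ⊗ B` on `H^{⊗l} = H^{⊗m} ⊗ H^{⊗(l-m)}`. -/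
def opTG {m l : ℕ} (h : m ≤ l) (A : TP n m →L[ℂ] TP n m)
    (B : TP n (l - m) →L[ℂ] TP n (l - m)) : TP n l →L[ℂ] TP n l :=
  ofMatR (Matrix.of fun w v => ent A (tk h w) (tk h v) * ent B (dr m w) (dr m v))

/-- The inductive-system map `ι_{m,l}(A) = p_l (A ⊗ 1) p_l : B(H_m) → B(H_l)`. -/
def iota (H : ∀ m, Submodule ℂ (TP n m)) {m l : ℕ} (h : m ≤ l)
    (A : ↥(H m) →L[ℂ] ↥(H m)) : ↥(H l) →L[ℂ] ↥(H l) :=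
  cmpOp H (opTG h (extOp H A) (ContinuousLinearMap.id ℂ (TP n (l - m))))

/-- The chirality-flipped inductive map `ῑ_{m,l}(A) = Σ_{|s|=l-m} S_s A S_s^* |_{H_l}`. -/
def iotabar (H : ∀ m, Submodule ℂ (TP n m)) {m l : ℕ} (h : m ≤ l)
    (A : ↥(H m) →L[ℂ] ↥(H m)) : ↥(H l) →L[ℂ] ↥(H l) :=
  cmpOp H (∑ s : Wd n (l - m),
    lshWTo H m l h s ∘L extOp H A ∘L ContinuousLinearMap.adjoint (lshWTo H m l h s))

/-- The word `j` of length one. -/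
def letter (j : Fin n) : Wd n 1 := fun _ => j

/-- `Q^{⊗m}` on `H^{⊗m}`. -/
def tpow (Q : TP n 1 →L[ℂ] TP n 1) (m : ℕ) : TP n m →L[ℂ] TP n m :=
  ofMatR (Matrix.of fun w v => ∏ i : Fin m, ent Q (letter (w i)) (letter (v i)))

/-- Diagonal entry `(Q^{⊗d})_{r,r}`. -/
def Qdg (Q : TP n 1 →L[ℂ] TP n 1) {d : ℕ} (r : Wd n d) : ℂ :=
  ∏ i, ent Q (letter (r i)) (letter (r i))

/-- Trace of an operator. -/
def trOp {E : Type*} [NormedAddCommGroup E] [Module ℂ E] (A : E →L[ℂ] E) : ℂ :=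
  LinearMap.trace ℂ E A.toLinearMap

/-- `Tr(Q_m)` where `Q_m = p_m Q^{⊗m} p_m ∈ B(H_m)`. -/
def trQ (H : ∀ m, Submodule ℂ (TP n m)) (Q : TP n 1 →L[ℂ] TP n 1) (m : ℕ) : ℂ :=
  trOp (cmpOp H (tpow Q m))

/-- The state `φ_m(A) = Tr(ρ^{(m)} A)`, `ρ^{(m)} = Q_m / Tr(Q_m)`. -/
def phiSt (H : ∀ m, Submodule ℂ (TP n m)) (Q : TP n 1 →L[ℂ] TP n 1) (m : ℕ)
    (A : ↥(H m) →L[ℂ] ↥(H m)) : ℂ :=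
  trOp (cmpOp H (tpow Q m) ∘L A) / trQ H Q m

/-- The projective-system map
`j_{l,m}(A) = (Tr Q_m / Tr Q_l) Σ_{|r|=l-m} (Q^{⊗(l-m)})_{r,r} R_r^* A R_r |_{H_m}`. -/
def jmap (H : ∀ m, Submodule ℂ (TP n m)) (Q : TP n 1 →L[ℂ] TP n 1) {m l : ℕ} (h : m ≤ l)
    (A : ↥(H l) →L[ℂ] ↥(H l)) : ↥(H m) →L[ℂ] ↥(H m) :=
  (trQ H Q m / trQ H Q l) • cmpOp H (∑ r : Wd n (l - m),
    Qdg Q r • (ContinuousLinearMap.adjoint (rshWTo H m l h r) ∘L extOp H A ∘L rshWTo H m l h r))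

/-- `ρ^{(m)} = Q_m / Tr(Q_m)`, extended by zero to `H^{⊗m}`. -/
def rhoExt (H : ∀ m, Submodule ℂ (TP n m)) (Q : TP n 1 →L[ℂ] TP n 1) (m : ℕ) :
    TP n m →L[ℂ] TP n m :=
  (trQ H Q m)⁻¹ • (prj H m ∘L tpow Q m ∘L prj H m)

/-- The normalization constant `√(Tr(Q_m)Tr(Q_k)/Tr(Q_{m+k}))`. -/
def lamC (H : ∀ m, Submodule ℂ (TP n m)) (Q : TP n 1 →L[ℂ] TP n 1) (m k : ℕ) : ℂ :=
  (trQ H Q m * trQ H Q k / trQ H Q (m + k)) ^ ((1 : ℂ) / 2)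

/-- Right tensoring `x ↦ x ⊗ y` as a continuous linear map. -/
def tensR {m k : ℕ} (y : TP n k) : TP n m →L[ℂ] TP n (m + k) :=
  ofMatR (Matrix.of fun w v => if wfst w = v then y (wsnd w) else 0)

/-- The map `V_{m,l} ψ = √(TrQ_m TrQ_{l-m}/TrQ_l) Σ_{|r|=l-m} p_l (R_r^* ψ ⊗ e_r)`,
realized as an operator on `H^{⊗(m+k)}` (with `l = m + k`). -/
def Vml (H : ∀ m, Submodule ℂ (TP n m)) (Q : TP n 1 →L[ℂ] TP n 1) (m k : ℕ) :
    TP n (m + k) →L[ℂ] TP n (m + k) :=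
  lamC H Q m k • ∑ r : Wd n k,
    prj H (m + k) ∘L tensR (EuclideanSpace.single r 1) ∘L
      ContinuousLinearMap.adjoint (rshW H m k r)

/-- The claimed adjoint `V_{m,l}^* = √(⋯) (ρ^{(l)})^{-1}(ρ^{(m)} ⊗ ρ^{(l-m)})`. -/
def VmlStar (H : ∀ m, Submodule ℂ (TP n m)) (Q : TP n 1 →L[ℂ] TP n 1) (m k : ℕ) :
    TP n (m + k) →L[ℂ] TP n (m + k) :=
  lamC H Q m k •
    (extOp H (trQ H Q (m + k) • Ring.inverse (cmpOp H (tpow Q (m + k)))) ∘L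
      opT (rhoExt H Q m) (rhoExt H Q k))

/-- The adjoint, with instances supplied explicitly. -/
def adjC {E F : Type*} [NormedAddCommGroup E] [NormedAddCommGroup F]
    [InnerProductSpace ℂ E] [InnerProductSpace ℂ F] [CompleteSpace E] [CompleteSpace F]
    (T : E →L[ℂ] F) : F →L[ℂ] E :=
  @ContinuousLinearMap.adjoint ℂ E F _ _ _ _ _ _ _ T

/-- Complete positivity of a map between operator algebras on Hilbert spaces:
positive matrices over the domain are sent to positive matrices over the codomain.
(Here `Nᴴ` is written as the transpose of the entrywise adjoint.) -/
def IsCP {E F' : Type*} [NormedAddCommGroup E] [InnerProductSpace ℂ E] [CompleteSpace E]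
    [NormedAddCommGroup F'] [InnerProductSpace ℂ F'] [CompleteSpace F']
    (Φ : (E →L[ℂ] E) → (F' →L[ℂ] F')) : Prop :=
  ∀ (d : ℕ) (M : Matrix (Fin d) (Fin d) (E →L[ℂ] E)),
    (∃ N : Matrix (Fin d) (Fin d) (E →L[ℂ] E), M = (N.map fun T => adjC T)ᵀ * N) →
    ∃ N' : Matrix (Fin d) (Fin d) (F' →L[ℂ] F'), M.map Φ = (N'.map fun T => adjC T)ᵀ * N'

/-- The vacuum vector `Ω ∈ H^{⊗0} = ℂ`. -/
def vac (n : ℕ) : TP n 0 := EuclideanSpace.single default 1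

/-- The symmetric subspace `H^{∨m} ⊆ H^{⊗m}`. -/
def symSub (n m : ℕ) : Submodule ℂ (TP n m) where
  carrier := {x | ∀ (σ : Equiv.Perm (Fin m)) (w : Wd n m), x (w ∘ σ) = x w}
  add_mem' := by
    intro a b ha hb σ w
    show (a + b) (w ∘ σ) = (a + b) w
    simp only [PiLp.add_apply, ha σ w, hb σ w]
  zero_mem' := by
    intro σ w
    show (0 : TP n m) (w ∘ σ) = (0 : TP n m) w
    simp
  smul_mem' := by
    intro c x hx σ w
    show (c • x) (w ∘ σ) = (c • x) w
    simp only [PiLp.smul_apply, hx σ w]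

/-- Rank-one operator `|x⟩⟨x|`. -/
def rankOne {F : Type*} [NormedAddCommGroup F] [InnerProductSpace ℂ F] (x : F) :
    F →L[ℂ] F :=
  (innerSL ℂ x).smulRight x

end
noncomputable section Aux
variable {n : ℕ}

lemma ofMatR_apply {ι κ : Type} [Fintype ι] [Fintype κ] [DecidableEq ι] [DecidableEq κ]
    (M : Matrix ι κ ℂ) (x : EuclideanSpace ℂ κ) (w : ι) :
    ofMatR M x w = ∑ v, M w v * x v := by
  simp [ofMatR, Matrix.toEuclideanLin_apply, Matrix.mulVec, dotProduct]

lemma adjoint_ofMatR {ι κ : Type} [Fintype ι] [Fintype κ] [DecidableEq ι] [DecidableEq κ]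
    (M : Matrix ι κ ℂ) :
    ContinuousLinearMap.adjoint (ofMatR M) = ofMatR Mᴴ := by
  rw [ofMatR, ofMatR, ← LinearMap.adjoint_toContinuousLinearMap,
    ← Matrix.toEuclideanLin_conjTranspose_eq_adjoint]

lemma adjoint_prj (H : ∀ m, Submodule ℂ (TP n m)) (m : ℕ) :
    ContinuousLinearMap.adjoint (prj H m) = prj H m :=
  (isSelfAdjoint_starProjection (H m)).adjoint_eq

lemma prj_mem (H : ∀ m, Submodule ℂ (TP n m)) (m : ℕ) (x : TP n m) : prj H m x ∈ H m :=
  Submodule.coe_mem _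

lemma prj_eq_self (H : ∀ m, Submodule ℂ (TP n m)) (m : ℕ) {x : TP n m} (hx : x ∈ H m) :
    prj H m x = x :=
  Submodule.starProjection_eq_self_iff.mpr hx

/-- auxiliary "cons" valid for any `b = 1 + a`. -/
def cns {a b : ℕ} (hb : b = 1 + a) (c : Fin n) (v : Wd n a) : Wd n b :=
  fun i => if h : i.1 = 0 then c else v ⟨i.1 - 1, by omega⟩

lemma wfst_cns {a : ℕ} (hb : 1 + a = 1 + a) (c : Fin n) (v : Wd n a) :
    wfst (m := 1) (k := a) (cns hb c v) = fun _ => c := by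
  funext i
  have : i = 0 := Fin.fin_one_eq_zero i
  subst this
  simp [wfst, cns]

lemma wsnd_cns {a : ℕ} (hb : 1 + a = 1 + a) (c : Fin n) (v : Wd n a) :
    wsnd (m := 1) (k := a) (cns hb c v) = v := by
  funext i
  simp [wsnd, cns, Fin.natAdd]

/-- Slicing at first coordinate as a linear map. -/
def sliceL {a b : ℕ} (hb : b = 1 + a) (c : Fin n) : TP n b →ₗ[ℂ] TP n a where
  toFun z := (WithLp.equiv 2 (Wd n a → ℂ)).symm (fun v => z (cns hb c v))
  map_add' z1 z2 := by
    ext v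
    simp [WithLp.equiv_symm_apply, PiLp.toLp_apply]
  map_smul' c z := by
    ext v
    simp [WithLp.equiv_symm_apply, PiLp.toLp_apply]

lemma slice_mem_tensorSub {a : ℕ} (K : Submodule ℂ (TP n 1)) (L : Submodule ℂ (TP n a))
    (c : Fin n) {z : TP n (1 + a)} (hz : z ∈ tensorSub K L) :
    sliceL rfl c z ∈ L := by
  have hle : tensorSub K L ≤ L.comap (sliceL (n := n) rfl c) := by
    rw [tensorSub, Submodule.span_le]
    rintro z ⟨x, hx, y, hy, rfl⟩
    simp only [Submodule.mem_comap, SetLike.mem_coe]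
    have hsl : sliceL rfl c (tmul x y) = x (fun _ => c) • y := by
      ext v
      simp only [sliceL, tmul, WithLp.equiv_symm_apply, PiLp.toLp_apply, LinearMap.coe_mk, AddHom.coe_mk,
        PiLp.smul_apply, smul_eq_mul]
      rw [wfst_cns, wsnd_cns]
    rw [hsl]
    exact L.smul_mem _ hy
  exact hle hz

lemma slice_mem {H : ∀ m, Submodule ℂ (TP n m)} (hsp : IsSubproduct H) {a b : ℕ}
    (hb : b = 1 + a) {ψ : TP n b} (hψ : ψ ∈ H b) (c : Fin n) :
    sliceL hb c ψ ∈ H a := by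
  subst hb
  exact slice_mem_tensorSub _ _ c (hsp.2 1 a hψ)

lemma cns_eq_cons {a : ℕ} (c : Fin n) (v : Wd n a) :
    cns (Nat.add_comm a 1) c v = Fin.cons c v := by
  funext i
  induction i using Fin.cases with
  | zero => simp [cns]
  | succ j => exact (Fin.cons_succ (α := fun _ : Fin (a+1) => Fin n) c v j).symm

end Aux
noncomputable section Aux2
variable {n : ℕ}

lemma cond_iff {a : ℕ} (w : Wd n (a+1)) (j : Fin n) (v : Wd n a) :
    (w 0 = j ∧ (fun i : Fin a => w i.succ) = v) ↔ w = Fin.cons j v := by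
  constructor
  · rintro ⟨rfl, rfl⟩
    exact (Fin.cons_self_tail w).symm
  · rintro rfl
    exact ⟨Fin.cons_zero _ _, funext fun i => Fin.cons_succ _ _ _⟩

lemma lcreate_adjoint_apply {a : ℕ} (j : Fin n) (ψ : TP n (a+1)) :
    ContinuousLinearMap.adjoint (lcreate j a) ψ =
      (WithLp.equiv 2 (Wd n a → ℂ)).symm (fun v => ψ (Fin.cons j v)) := by
  rw [lcreate, adjoint_ofMatR]
  ext v
  rw [ofMatR_apply]
  simp only [Matrix.conjTranspose_apply, Matrix.of_apply, WithLp.equiv_symm_apply, PiLp.toLp_apply]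
  simp only [cond_iff]
  simp [Finset.sum_ite_eq']

lemma lcreate_apply {a : ℕ} (j : Fin n) (x : TP n a) (w : Wd n (a+1)) :
    lcreate j a x w = if w 0 = j then x (fun i => w i.succ) else 0 := by
  rw [lcreate, ofMatR_apply]
  simp only [Matrix.of_apply]
  by_cases h : w 0 = j
  · simp [h, Finset.sum_ite_eq]
  · simp [h]

lemma one_step {H : ∀ m, Submodule ℂ (TP n m)} (hsp : IsSubproduct H) (a : ℕ)
    (ψ : TP n (a+1)) (hψ : ψ ∈ H (a+1)) :
    ∑ j : Fin n, lsh H j a (ContinuousLinearMap.adjoint (lsh H j a) ψ) = ψ := by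
  have hslice : ∀ j : Fin n,
      ((WithLp.equiv 2 (Wd n a → ℂ)).symm (fun v => ψ (Fin.cons j v)) : TP n a) ∈ H a := by
    intro j
    have h := slice_mem hsp (Nat.add_comm a 1) hψ j
    have he : sliceL (Nat.add_comm a 1) j ψ
        = (WithLp.equiv 2 (Wd n a → ℂ)).symm (fun v => ψ (Fin.cons j v)) := by
      ext v
      simp only [sliceL, LinearMap.coe_mk, AddHom.coe_mk, WithLp.equiv_symm_apply, PiLp.toLp_apply]
      rw [cns_eq_cons]
    rwa [he] at h
  have hadj : ∀ j : Fin n, ContinuousLinearMap.adjoint (lsh H j a) ψ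
      = (WithLp.equiv 2 (Wd n a → ℂ)).symm (fun v => ψ (Fin.cons j v)) := by
    intro j
    rw [lsh, ContinuousLinearMap.adjoint_comp, ContinuousLinearMap.adjoint_comp,
      adjoint_prj, adjoint_prj]
    simp only [ContinuousLinearMap.comp_apply]
    rw [prj_eq_self H (a+1) hψ, lcreate_adjoint_apply, prj_eq_self H a (hslice j)]
  have hsum : (∑ j : Fin n, lcreate j a
      ((WithLp.equiv 2 (Wd n a → ℂ)).symm (fun v => ψ (Fin.cons j v)))) = ψ := by
    ext w
    rw [WithLp.ofLp_sum, Finset.sum_apply]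
    simp only [lcreate_apply, WithLp.equiv_symm_apply, PiLp.toLp_apply]
    rw [Finset.sum_ite_eq]
    simp only [Finset.mem_univ, if_true]
    exact congrArg ψ (Fin.cons_self_tail w)
  calc ∑ j : Fin n, lsh H j a (ContinuousLinearMap.adjoint (lsh H j a) ψ)
      = prj H (a+1) (∑ j : Fin n, lcreate j a
          ((WithLp.equiv 2 (Wd n a → ℂ)).symm (fun v => ψ (Fin.cons j v)))) := by
        rw [map_sum]
        refine Finset.sum_congr rfl fun j _ => ?_
        rw [hadj j, lsh]
        simp only [ContinuousLinearMap.comp_apply]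
        rw [prj_eq_self H a (hslice j)]
    _ = ψ := by rw [hsum]; exact prj_eq_self H (a+1) hψ

end Aux2
noncomputable section Aux3
variable {n : ℕ}

lemma adjoint_lsh_mem (H : ∀ m, Submodule ℂ (TP n m)) (j : Fin n) (a : ℕ)
    (ψ : TP n (a+1)) : ContinuousLinearMap.adjoint (lsh H j a) ψ ∈ H a := by
  rw [lsh, ContinuousLinearMap.adjoint_comp, ContinuousLinearMap.adjoint_comp,
    adjoint_prj, adjoint_prj]
  simp only [ContinuousLinearMap.comp_apply]
  exact prj_mem _ _ _

lemma consEquiv_eq (m : ℕ) (p : Fin n × Wd n m) :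
    (Fin.consEquiv fun _ : Fin (m+1) => Fin n) p = Fin.cons p.1 p.2 := rfl

lemma lshW_cons (H : ∀ m, Submodule ℂ (TP n m)) (k m : ℕ) (j : Fin n) (s : Wd n m) :
    lshW H k (m+1) (Fin.cons j s) = lsh H j (k+m) ∘L lshW H k m s := by
  simp only [lshW, Fin.cons_zero, Fin.tail_cons]

end Aux3

/-- For a subproduct system, `Σ_{|r|=m} S_r S_r^* |_{H_l} = p_l`
for all `m ≤ l` (written with `l = k + m`). -/
theorem stmt1 {n : ℕ} (H : ∀ m, Submodule ℂ (TP n m)) (hsp : IsSubproduct H)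
    (k m : ℕ) (ψ : TP n (k + m)) (hψ : ψ ∈ H (k + m)) :
    ∑ r : Wd n m, lshW H k m r (ContinuousLinearMap.adjoint (lshW H k m r) ψ) = ψ := by
  induction m with
  | zero =>
    have h0 : ∀ r : Wd n 0, lshW H k 0 r = ContinuousLinearMap.id ℂ (TP n k) := fun _ => rfl
    simp [h0, ContinuousLinearMap.adjoint_id]
  | succ m ih =>
    rw [← Equiv.sum_comp (Fin.consEquiv (fun _ : Fin (m+1) => Fin n))
      (fun r : Wd n (m+1) => lshW H k (m+1) r (ContinuousLinearMap.adjoint (lshW H k (m+1) r) ψ)),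
      Fintype.sum_prod_type]
    show ∑ j : Fin n, ∑ s : Wd n m,
        (lsh H j (k+m) ∘L lshW H k m s)
          ((ContinuousLinearMap.adjoint (lsh H j (k+m) ∘L lshW H k m s)) ψ) = ψ
    simp only [ContinuousLinearMap.adjoint_comp, ContinuousLinearMap.comp_apply]
    have hinner : ∀ j : Fin n,
        (∑ s : Wd n m, lsh H j (k+m) (lshW H k m s (ContinuousLinearMap.adjoint (lshW H k m s)
            (ContinuousLinearMap.adjoint (lsh H j (k+m)) ψ))))
        = lsh H j (k+m) (ContinuousLinearMap.adjoint (lsh H j (k+m)) ψ) := by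
      intro j
      rw [← map_sum]
      congr 1
      exact ih _ (adjoint_lsh_mem H j (k+m) ψ)
    simp only [hinner]
    exact one_step hsp (k+m) ψ hψ
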